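/- Let P and Q be orthogonal projections on a Hilbert space H with P Q P compact, and suppose λ ∈ σ(P + Q) with λ ≠ 0 and λ ≠ 1. Then there exists a nonzero vector g in the range of P such that P Q P g = (λ−1)² g; in particular (λ−1)² is an eigenvalue of P Q P. -/

import Mathlib

open ContinuousLinearMap

local notation "⟪" x ", " y "⟫" => @inner ℂ _ _ x y

lemma proj_contraction {H : Type*} [NormedAddCommGroup H] [InnerProductSpace ℂ H]
    [CompleteSpace H] (R : H →L[ℂ] H) (hR : R ∘L R = R)
    (hRa : ContinuousLinearMap.adjoint R = R) (v : H) : ‖R v‖ ≤ ‖v‖ := by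
  have hR' : R (R v) = R v := by
    conv_rhs => rw [← hR]
    rfl
  have h1 : ⟪R v, R v⟫ = ⟪v, R v⟫ := by
    have := ContinuousLinearMap.adjoint_inner_left R (R v) v
    rw [hRa] at this
    rw [this, hR']
  have h2 : (‖R v‖ : ℝ) ^ 2 = ‖⟪v, R v⟫‖ := by
    rw [← h1, inner_self_eq_norm_sq_to_K]
    simp [norm_pow]
  have h3 : ‖⟪v, R v⟫‖ ≤ ‖v‖ * ‖R v‖ := norm_inner_le_norm v (R v)
  rcases eq_or_lt_of_le (norm_nonneg (R v)) with h | h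
  · rw [← h]; exact norm_nonneg v
  · have : ‖R v‖ * ‖R v‖ ≤ ‖v‖ * ‖R v‖ := by nlinarith
    exact le_of_mul_le_mul_right this h

lemma selfadjoint_approx_eigen {H : Type*} [NormedAddCommGroup H] [InnerProductSpace ℂ H]
    [CompleteSpace H] (A : H →L[ℂ] H) (hA : ContinuousLinearMap.adjoint A = A)
    (lam : ℂ) (hlam : lam ∈ spectrum ℂ A) :
    ∀ ε > 0, ∃ x : H, ‖x‖ = 1 ∧ ‖A x - lam • x‖ < ε := by
  by_contra hcon
  push_neg at hcon
  obtain ⟨ε, hε, hb⟩ := hcon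
  set B : H →L[ℂ] H := A - lam • 1 with hBdef
  have hBapp : ∀ x : H, B x = A x - lam • x := fun x => by
    simp [hBdef, ContinuousLinearMap.sub_apply, ContinuousLinearMap.smul_apply,
      ContinuousLinearMap.one_apply]
  have lower : ∀ x : H, ε * ‖x‖ ≤ ‖B x‖ := by
    intro x
    rcases eq_or_ne x 0 with rfl | hx
    · simp
    · have hnx : (0:ℝ) < ‖x‖ := norm_pos_iff.mpr hx
      have hy : ‖((‖x‖ : ℂ)⁻¹ • x)‖ = 1 := by
        rw [norm_smul]
        simp [norm_inv, hnx.ne']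
      have := hb _ hy
      rw [← hBapp] at this
      rw [map_smul] at this
      rw [norm_smul] at this
      simp only [norm_inv, Complex.norm_real, Real.norm_eq_abs, abs_of_pos hnx] at this
      calc ε * ‖x‖ ≤ (‖x‖⁻¹ * ‖B x‖) * ‖x‖ :=
            mul_le_mul_of_nonneg_right this hnx.le
        _ = ‖B x‖ := by field_simp
  have anti : AntilipschitzWith ((⟨ε, hε.le⟩ : NNReal)⁻¹) B := by
    apply ContinuousLinearMap.antilipschitz_of_bound
    intro x
    have := lower x
    change ‖x‖ ≤ ε⁻¹ * ‖B x‖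
    calc ‖x‖ = ε⁻¹ * (ε * ‖x‖) := by field_simp
      _ ≤ ε⁻¹ * ‖B x‖ := mul_le_mul_of_nonneg_left this (inv_nonneg.mpr hε.le)
  have hinj : Function.Injective B := anti.injective
  have hclosed : IsClosed (Set.range B) := anti.isClosed_range B.uniformContinuous
  have hclosed' : IsClosed ((LinearMap.range (B : H →ₗ[ℂ] H) : Submodule ℂ H) : Set H) := by
    rwa [LinearMap.coe_range]
  haveI : CompleteSpace (LinearMap.range (B : H →ₗ[ℂ] H) : Submodule ℂ H) := hclosed'.completeSpace_coe
  have horth : (LinearMap.range (B : H →ₗ[ℂ] H) : Submodule ℂ H)ᗮ = ⊥ := by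
    rw [Submodule.eq_bot_iff]
    intro y hy
    have hy' : ∀ x : H, ⟪B x, y⟫ = 0 := fun x =>
      (Submodule.mem_orthogonal _ y).mp hy (B x) (LinearMap.mem_range_self _ x)
    have hAy : A y = (starRingEnd ℂ) lam • y := by
      have key : ∀ x : H, ⟪x, A y - (starRingEnd ℂ) lam • y⟫ = 0 := by
        intro x
        have h1 := hy' x
        rw [hBapp] at h1
        rw [inner_sub_left, inner_smul_left] at h1
        have h2 : ⟪A x, y⟫ = ⟪x, A y⟫ := by
          have := ContinuousLinearMap.adjoint_inner_left A y x
          rw [hA] at this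
          exact this.symm ▸ (by rw [← this])
        rw [inner_sub_right, inner_smul_right]
        rw [← h2]
        linear_combination h1
      have := key (A y - (starRingEnd ℂ) lam • y)
      rw [inner_self_eq_zero] at this
      linear_combination (norm := module) this
    have hBy : B y = 0 := by
      by_cases hy0 : y = 0
      · simp [hy0]
      · have hlr : lam = (starRingEnd ℂ) lam := by
          have e1 : ⟪A y, y⟫ = ⟪y, A y⟫ := by
            have := ContinuousLinearMap.adjoint_inner_left A y y
            rw [hA] at this
            exact this
          rw [hAy, inner_smul_left, inner_smul_right] at e1
          simp only [RingHom.id_apply, starRingEnd_self_apply] at e1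
          have hyy : ⟪y, y⟫ ≠ 0 := inner_self_ne_zero.mpr hy0
          exact mul_right_cancel₀ hyy e1
        rw [hBapp, hAy, ← hlr, sub_self]
    have := lower y
    rw [hBy, norm_zero] at this
    have : ‖y‖ ≤ 0 := by nlinarith
    exact norm_le_zero_iff.mp this
  have hsurj : LinearMap.range (B : H →ₗ[ℂ] H) = ⊤ := by
    rwa [← Submodule.orthogonal_eq_bot_iff]
  have hBunit : IsUnit B :=
    ContinuousLinearMap.isUnit_iff_bijective.mpr
      ⟨hinj, LinearMap.range_eq_top.mp hsurj⟩
  have := spectrum.mem_iff.mp hlam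
  apply this
  have heq : algebraMap ℂ (H →L[ℂ] H) lam - A = -B := by
    rw [Algebra.algebraMap_eq_smul_one, hBdef]
    abel
  rw [heq]
  exact hBunit.neg

lemma px_lower {H : Type*} [NormedAddCommGroup H] [InnerProductSpace ℂ H]
    [CompleteSpace H] (P Q : H →L[ℂ] H)
    (hQ : Q ∘L Q = Q) (hQa : ContinuousLinearMap.adjoint Q = Q)
    (lam : ℂ) (h1 : lam ≠ 1) (x : H) :
    ‖lam‖ * ‖x‖ ≤ (1 + ‖1 - lam‖⁻¹) * (‖P x‖ + ‖(P + Q) x - lam • x‖) := by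
  set e : H := (P + Q) x - lam • x with hedef
  have hQ' : ∀ v : H, Q (Q v) = Q v := fun v => by
    rw [← ContinuousLinearMap.comp_apply, hQ]
  have hid : (1 - lam) • Q x = Q e - Q (P x) := by
    rw [hedef]
    simp only [map_sub, map_add, map_smul, ContinuousLinearMap.add_apply, hQ']
    module
  have hc : (0:ℝ) < ‖1 - lam‖ := norm_pos_iff.mpr (sub_ne_zero.mpr (Ne.symm h1))
  have hQc : ∀ v : H, ‖Q v‖ ≤ ‖v‖ := proj_contraction Q hQ hQa
  have h2 : ‖1 - lam‖ * ‖Q x‖ ≤ ‖e‖ + ‖P x‖ := by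
    calc ‖1 - lam‖ * ‖Q x‖ = ‖(1 - lam) • Q x‖ := (norm_smul _ _).symm
      _ = ‖Q e - Q (P x)‖ := by rw [hid]
      _ ≤ ‖Q e‖ + ‖Q (P x)‖ := norm_sub_le _ _
      _ ≤ ‖e‖ + ‖P x‖ := add_le_add (hQc e) (hQc (P x))
  have h3 : lam • x = P x + Q x - e := by
    rw [hedef]; simp only [ContinuousLinearMap.add_apply]; module
  have h4 : ‖lam‖ * ‖x‖ ≤ ‖P x‖ + ‖Q x‖ + ‖e‖ := by
    calc ‖lam‖ * ‖x‖ = ‖lam • x‖ := (norm_smul _ _).symm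
      _ = ‖P x + Q x - e‖ := by rw [h3]
      _ ≤ ‖P x + Q x‖ + ‖e‖ := norm_sub_le _ _
      _ ≤ ‖P x‖ + ‖Q x‖ + ‖e‖ := by
          have := norm_add_le (P x) (Q x); linarith
  have hinv : (0:ℝ) ≤ ‖1 - lam‖⁻¹ := inv_nonneg.mpr hc.le
  nlinarith [mul_le_mul_of_nonneg_left h2 hinv, mul_inv_cancel₀ hc.ne',
    norm_nonneg e, norm_nonneg (P x)]

theorem eigenvalue_of_spectrum_sum_proj {H : Type*} [NormedAddCommGroup H]
    [InnerProductSpace ℂ H] [CompleteSpace H] (P Q : H →L[ℂ] H)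
    (hP : P ∘L P = P) (hPa : ContinuousLinearMap.adjoint P = P)
    (hQ : Q ∘L Q = Q) (hQa : ContinuousLinearMap.adjoint Q = Q)
    (hcpt : IsCompactOperator (P ∘L Q ∘L P))
    (lam : ℂ) (h0 : lam ≠ 0) (h1 : lam ≠ 1) (hlam : lam ∈ spectrum ℂ (P + Q)) :
    ∃ g : H, g ≠ 0 ∧ (∃ h : H, P h = g) ∧ (P ∘L Q ∘L P) g = (lam - 1) ^ 2 • g := by
  classical
  set A : H →L[ℂ] H := P + Q with hAdef
  have hA : ContinuousLinearMap.adjoint A = A := by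
    rw [hAdef, map_add, hPa, hQa]
  have hP' : ∀ v : H, P (P v) = P v := fun v => by
    rw [← ContinuousLinearMap.comp_apply, hP]
  have hQ' : ∀ v : H, Q (Q v) = Q v := fun v => by
    rw [← ContinuousLinearMap.comp_apply, hQ]
  set C : H →L[ℂ] H := P ∘L Q ∘L P with hCdef
  set μ : ℂ := (lam - 1) ^ 2 with hμdef
  have hμ : μ ≠ 0 := pow_ne_zero _ (sub_ne_zero.mpr h1)
  -- key algebraic identity
  have key : ∀ v : H, C (P v) - μ • P v
      = P (A (A v - lam • v) - (2 - lam) • (A v - lam • v)) := by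
    intro v
    simp only [hCdef, hAdef, hμdef, ContinuousLinearMap.comp_apply,
      ContinuousLinearMap.add_apply, map_sub, map_add, map_smul, hP', hQ']
    module
  -- approximate eigenvectors
  have hex : ∀ n : ℕ, ∃ x : H, ‖x‖ = 1 ∧ ‖A x - lam • x‖ < 1 / (n + 1) := fun n =>
    selfadjoint_approx_eigen A hA lam hlam (1 / (n + 1)) (by positivity)
  choose x hx1 hx2 using hex
  set e : ℕ → H := fun n => A (x n) - lam • x n with hedef
  have he : Filter.Tendsto (fun n => ‖e n‖) Filter.atTop (nhds 0) :=
    squeeze_zero (fun n => norm_nonneg _) (fun n => (hx2 n).le)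
      tendsto_one_div_add_atTop_nhds_zero_nat
  have he0 : Filter.Tendsto e Filter.atTop (nhds 0) :=
    tendsto_zero_iff_norm_tendsto_zero.mpr he
  set g : ℕ → H := fun n => P (x n) with hgdef
  have hg1 : ∀ n, ‖g n‖ ≤ 1 := fun n => by
    rw [hgdef]; calc ‖P (x n)‖ ≤ ‖x n‖ := proj_contraction P hP hPa (x n)
      _ = 1 := hx1 n
  -- residual
  set F : H →L[ℂ] H := P ∘L (A - (2 - lam) • 1) with hFdef
  have hFe : ∀ n, C (g n) - μ • g n = F (e n) := by
    intro n
    rw [hgdef]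
    rw [key (x n)]
    simp [hFdef, hedef, ContinuousLinearMap.comp_apply, ContinuousLinearMap.sub_apply,
      ContinuousLinearMap.smul_apply, ContinuousLinearMap.one_apply]
  have hr : Filter.Tendsto (fun n => C (g n) - μ • g n) Filter.atTop (nhds 0) := by
    have : Filter.Tendsto (fun n => F (e n)) Filter.atTop (nhds (F 0)) :=
      (F.continuous.tendsto 0).comp he0
    rw [map_zero] at this
    simpa only [hFe] using this
  -- compactness
  obtain ⟨K, hK, hKs⟩ := hcpt.image_subset_compact_of_bounded
    (Metric.isBounded_closedBall (x := (0:H)) (r := 1))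
  have hgK : ∀ n, C (g n) ∈ K := fun n =>
    hKs ⟨g n, by simpa [Metric.mem_closedBall, dist_zero_right] using hg1 n, rfl⟩
  obtain ⟨y, -, φ, hφ, hy⟩ := hK.tendsto_subseq hgK
  have hrφ : Filter.Tendsto (fun n => C (g (φ n)) - μ • g (φ n)) Filter.atTop (nhds 0) :=
    hr.comp hφ.tendsto_atTop
  have hμg : Filter.Tendsto (fun n => μ • g (φ n)) Filter.atTop (nhds y) := by
    have := hy.sub hrφ
    simpa using this
  set gg : H := μ⁻¹ • y with hginf
  have hgconv : Filter.Tendsto (fun n => g (φ n)) Filter.atTop (nhds gg) := by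
    have := hμg.const_smul μ⁻¹
    simpa [inv_smul_smul₀ hμ] using this
  have hPg : P gg = gg := by
    have h5 : Filter.Tendsto (fun n => P (g (φ n))) Filter.atTop (nhds (P gg)) :=
      (P.continuous.tendsto gg).comp hgconv
    have h6 : ∀ n, P (g (φ n)) = g (φ n) := fun n => by rw [hgdef]; exact hP' _
    rw [show (fun n => P (g (φ n))) = fun n => g (φ n) from funext h6] at h5
    exact tendsto_nhds_unique h5 hgconv
  have hCg : C gg = μ • gg := by
    have h5 : Filter.Tendsto (fun n => C (g (φ n))) Filter.atTop (nhds (C gg)) :=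
      (C.continuous.tendsto gg).comp hgconv
    have h7 : C gg = y := tendsto_nhds_unique h5 hy
    rw [h7, hginf, smul_inv_smul₀ hμ]
  have hg0 : gg ≠ 0 := by
    intro hz
    have hb : ∀ n, ‖lam‖ ≤ (1 + ‖1 - lam‖⁻¹) * (‖g (φ n)‖ + ‖e (φ n)‖) := by
      intro n
      have := px_lower P Q hQ hQa lam h1 (x (φ n))
      rw [hx1 (φ n), mul_one] at this
      exact this
    have heφ : Filter.Tendsto (fun n => ‖e (φ n)‖) Filter.atTop (nhds 0) :=
      he.comp hφ.tendsto_atTop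
    have hlim : Filter.Tendsto (fun n => (1 + ‖1 - lam‖⁻¹) * (‖g (φ n)‖ + ‖e (φ n)‖))
        Filter.atTop (nhds ((1 + ‖1 - lam‖⁻¹) * (‖gg‖ + 0))) :=
      (Filter.Tendsto.add hgconv.norm heφ).const_mul _
    have hle : ‖lam‖ ≤ (1 + ‖1 - lam‖⁻¹) * (‖gg‖ + 0) := ge_of_tendsto' hlim hb
    rw [hz, norm_zero, add_zero, mul_zero] at hle
    have : (0:ℝ) < ‖lam‖ := norm_pos_iff.mpr h0
    linarith
  exact ⟨gg, hg0, ⟨gg, hPg⟩, hCg⟩
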